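/- Let A₄(n) denote the number of permutations of length n containing no 132 pattern and exactly four 123 patterns. Then in ℚ[[z]], the generating function F₄(z) = ∑_{n≥0} A₄(n)·zⁿ satisfies (1 - 2z)⁵·F₄(z) = -z⁴·(z⁵ - 3z⁴ + 11z³ - 13z² + 6z - 1). -/

import Mathlib

/-- The number of 132 patterns of a permutation `π` of `Fin n`:
triples of indices `i₁ < i₂ < i₃` with `π i₁ < π i₃ < π i₂`. -/
def count132 {n : ℕ} (π : Equiv.Perm (Fin n)) : ℕ :=
  (Finset.univ.filter (fun p : Fin n × Fin n × Fin n =>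
    p.1 < p.2.1 ∧ p.2.1 < p.2.2 ∧ π p.1 < π p.2.2 ∧ π p.2.2 < π p.2.1)).card

/-- The number of 123 patterns of a permutation `π` of `Fin n`:
triples of indices `i₁ < i₂ < i₃` with `π i₁ < π i₂ < π i₃`. -/
def count123 {n : ℕ} (π : Equiv.Perm (Fin n)) : ℕ :=
  (Finset.univ.filter (fun p : Fin n × Fin n × Fin n =>
    p.1 < p.2.1 ∧ p.2.1 < p.2.2 ∧ π p.1 < π p.2.1 ∧ π p.2.1 < π p.2.2)).card

/-- The number of 12 patterns of a permutation `π` of `Fin n`: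
pairs of indices `i₁ < i₂` with `π i₁ < π i₂`. -/
def count12 {n : ℕ} (π : Equiv.Perm (Fin n)) : ℕ :=
  (Finset.univ.filter (fun p : Fin n × Fin n =>
    p.1 < p.2 ∧ π p.1 < π p.2)).card

/-- The number of permutations of length n with no 132 pattern and exactly 4 123 patterns. -/
def A (n : ℕ) : ℕ :=
  (Finset.univ.filter (fun π : Equiv.Perm (Fin n) =>
    count132 π = 0 ∧ count123 π = 4)).card

namespace Aux
open Finset Equiv

lemma expand123 {n : ℕ} (π : Equiv.Perm (Fin n)) :
    count123 π = ∑ i : Fin n, ∑ j : Fin n, ∑ k : Fin n,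
      if i < j ∧ j < k ∧ π i < π j ∧ π j < π k then 1 else 0 := by
  rw [count123, Finset.card_filter, ← Finset.univ_product_univ, Finset.sum_product]
  refine Finset.sum_congr rfl fun i _ => ?_
  rw [← Finset.univ_product_univ, Finset.sum_product]
lemma expand132 {n : ℕ} (π : Equiv.Perm (Fin n)) :
    count132 π = ∑ i : Fin n, ∑ j : Fin n, ∑ k : Fin n,
      if i < j ∧ j < k ∧ π i < π k ∧ π k < π j then 1 else 0 := by
  rw [count132, Finset.card_filter, ← Finset.univ_product_univ, Finset.sum_product]
  refine Finset.sum_congr rfl fun i _ => ?_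
  rw [← Finset.univ_product_univ, Finset.sum_product]
lemma expand12 {n : ℕ} (π : Equiv.Perm (Fin n)) :
    count12 π = ∑ i : Fin n, ∑ j : Fin n, if i < j ∧ π i < π j then 1 else 0 := by
  rw [count12, Finset.card_filter, ← Finset.univ_product_univ, Finset.sum_product]

variable {a b : ℕ}


variable {a b : ℕ}

def blockFun (a b : ℕ) (f : Fin a → Fin a) (g : Fin b → Fin b) (i : Fin (a + b)) : Fin (a + b) :=
  if h : i.val < a then
    ⟨b + (f ⟨i.val, h⟩).val, by have := (f ⟨i.val, h⟩).isLt; omega⟩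
  else
    have hj : i.val - a < b := by have := i.isLt; omega
    ⟨(g ⟨i.val - a, hj⟩).val, by have := (g ⟨i.val - a, hj⟩).isLt; omega⟩

lemma blockFun_castAdd (f : Fin a → Fin a) (g : Fin b → Fin b) (i : Fin a) :
    (blockFun a b f g (Fin.castAdd b i)).val = b + (f i).val := by
  rw [blockFun, dif_pos (by simp [i.isLt])]
  simp

lemma blockFun_natAdd (f : Fin a → Fin a) (g : Fin b → Fin b) (j : Fin b) :
    (blockFun a b f g (Fin.natAdd a j)).val = (g j).val := by
  rw [blockFun, dif_neg (by simp)]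
  simp only []
  congr 2
  simp

lemma blockFun_inj {f : Fin a → Fin a} {g : Fin b → Fin b}
    (hf : Function.Injective f) (hg : Function.Injective g) :
    Function.Injective (blockFun a b f g) := by
  intro x y h
  have hv : (blockFun a b f g x).val = (blockFun a b f g y).val := congrArg Fin.val h
  clear h
  induction x using Fin.addCases with
  | left i =>
    induction y using Fin.addCases with
    | left j =>
      rw [blockFun_castAdd, blockFun_castAdd] at hv
      have : f i = f j := Fin.ext (by omega)
      rw [hf this]
    | right j =>
      rw [blockFun_castAdd, blockFun_natAdd] at hv
      have := (g j).isLt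
      omega
  | right i =>
    induction y using Fin.addCases with
    | left j =>
      rw [blockFun_natAdd, blockFun_castAdd] at hv
      have := (g i).isLt
      omega
    | right j =>
      rw [blockFun_natAdd, blockFun_natAdd] at hv
      have : g i = g j := Fin.ext hv
      rw [hg this]

noncomputable def blockPerm (F : Perm (Fin a)) (G : Perm (Fin b)) : Perm (Fin (a + b)) :=
  Equiv.ofBijective _ (Finite.injective_iff_bijective.mp (blockFun_inj F.injective G.injective))

lemma blockPerm_castAdd (F : Perm (Fin a)) (G : Perm (Fin b)) (i : Fin a) :
    (blockPerm F G (Fin.castAdd b i)).val = b + (F i).val :=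
  blockFun_castAdd _ _ i

lemma blockPerm_natAdd (F : Perm (Fin a)) (G : Perm (Fin b)) (j : Fin b) :
    (blockPerm F G (Fin.natAdd a j)).val = (G j).val :=
  blockFun_natAdd _ _ j


variable (F : Perm (Fin a)) (G : Perm (Fin b))
lemma count12_blockPerm : count12 (blockPerm F G) = count12 F + count12 G := by
  rw [expand12, expand12, expand12]
  simp only [Fin.sum_univ_add]
  simp only [Fin.lt_def, blockPerm_castAdd, blockPerm_natAdd, Fin.coe_castAdd, Fin.coe_natAdd]
  rw [Finset.sum_add_distrib, Finset.sum_add_distrib]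
  have h2 : (∑ i : Fin a, ∑ j : Fin b,
      if (i.val < a + j.val ∧ b + (F i).val < (G j).val) then 1 else 0) = 0 := by
    refine Finset.sum_eq_zero fun i _ => Finset.sum_eq_zero fun j _ => ?_
    rw [if_neg]
    have := (G j).isLt
    omega
  have h3 : (∑ i : Fin b, ∑ j : Fin a,
      if (a + i.val < j.val ∧ (G i).val < b + (F j).val) then 1 else 0) = 0 := by
    refine Finset.sum_eq_zero fun i _ => Finset.sum_eq_zero fun j _ => ?_
    rw [if_neg]
    have := j.isLt
    omega
  rw [h2, h3]
  have h1 : (∑ i : Fin a, ∑ j : Fin a,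
      if (i.val < j.val ∧ b + (F i).val < b + (F j).val) then 1 else 0)
      = ∑ i : Fin a, ∑ j : Fin a, if (i.val < j.val ∧ (F i).val < (F j).val) then 1 else 0 := by
    refine Finset.sum_congr rfl fun i _ => Finset.sum_congr rfl fun j _ => ?_
    refine if_congr (by omega) rfl rfl
  have h4 : (∑ i : Fin b, ∑ j : Fin b,
      if (a + i.val < a + j.val ∧ (G i).val < (G j).val) then 1 else 0)
      = ∑ i : Fin b, ∑ j : Fin b, if (i.val < j.val ∧ (G i).val < (G j).val) then 1 else 0 := by
    refine Finset.sum_congr rfl fun i _ => Finset.sum_congr rfl fun j _ => ?_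
    refine if_congr (by omega) rfl rfl
  rw [h1, h4]
  omega

lemma count123_blockPerm : count123 (blockPerm F G) = count123 F + count123 G := by
  rw [expand123, expand123, expand123]
  simp only [Fin.sum_univ_add]
  simp only [Fin.lt_def, blockPerm_castAdd, blockPerm_natAdd, Fin.coe_castAdd, Fin.coe_natAdd]
  simp only [Finset.sum_add_distrib]
  have dFFG : (∑ i : Fin a, ∑ j : Fin a, ∑ k : Fin b,
      if i.val < j.val ∧ j.val < a + k.val ∧ b + (F i).val < b + (F j).val ∧ b + (F j).val < (G k).val then 1 else 0) = 0 := by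
    refine Finset.sum_eq_zero fun i _ => Finset.sum_eq_zero fun j _ => Finset.sum_eq_zero fun k _ => ?_
    rw [if_neg]; have := (G k).isLt; omega
  have dFGF : (∑ i : Fin a, ∑ j : Fin b, ∑ k : Fin a,
      if i.val < a + j.val ∧ a + j.val < k.val ∧ b + (F i).val < (G j).val ∧ (G j).val < b + (F k).val then 1 else 0) = 0 := by
    refine Finset.sum_eq_zero fun i _ => Finset.sum_eq_zero fun j _ => Finset.sum_eq_zero fun k _ => ?_
    rw [if_neg]; have := (G j).isLt; omega
  have dFGG : (∑ i : Fin a, ∑ j : Fin b, ∑ k : Fin b,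
      if i.val < a + j.val ∧ a + j.val < a + k.val ∧ b + (F i).val < (G j).val ∧ (G j).val < (G k).val then 1 else 0) = 0 := by
    refine Finset.sum_eq_zero fun i _ => Finset.sum_eq_zero fun j _ => Finset.sum_eq_zero fun k _ => ?_
    rw [if_neg]; have := (G j).isLt; omega
  have dGFF : (∑ i : Fin b, ∑ j : Fin a, ∑ k : Fin a,
      if a + i.val < j.val ∧ j.val < k.val ∧ (G i).val < b + (F j).val ∧ b + (F j).val < b + (F k).val then 1 else 0) = 0 := by
    refine Finset.sum_eq_zero fun i _ => Finset.sum_eq_zero fun j _ => Finset.sum_eq_zero fun k _ => ?_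
    rw [if_neg]; have := j.isLt; omega
  have dGFG : (∑ i : Fin b, ∑ j : Fin a, ∑ k : Fin b,
      if a + i.val < j.val ∧ j.val < a + k.val ∧ (G i).val < b + (F j).val ∧ b + (F j).val < (G k).val then 1 else 0) = 0 := by
    refine Finset.sum_eq_zero fun i _ => Finset.sum_eq_zero fun j _ => Finset.sum_eq_zero fun k _ => ?_
    rw [if_neg]; have := j.isLt; omega
  have dGGF : (∑ i : Fin b, ∑ j : Fin b, ∑ k : Fin a,
      if a + i.val < a + j.val ∧ a + j.val < k.val ∧ (G i).val < (G j).val ∧ (G j).val < b + (F k).val then 1 else 0) = 0 := by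
    refine Finset.sum_eq_zero fun i _ => Finset.sum_eq_zero fun j _ => Finset.sum_eq_zero fun k _ => ?_
    rw [if_neg]; have := k.isLt; omega
  have hFFF : (∑ i : Fin a, ∑ j : Fin a, ∑ k : Fin a,
      if i.val < j.val ∧ j.val < k.val ∧ b + (F i).val < b + (F j).val ∧ b + (F j).val < b + (F k).val then 1 else 0)
      = ∑ i : Fin a, ∑ j : Fin a, ∑ k : Fin a,
      if i.val < j.val ∧ j.val < k.val ∧ (F i).val < (F j).val ∧ (F j).val < (F k).val then 1 else 0 := by
    refine Finset.sum_congr rfl fun i _ => Finset.sum_congr rfl fun j _ => Finset.sum_congr rfl fun k _ => ?_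
    exact if_congr (by omega) rfl rfl
  have hGGG : (∑ i : Fin b, ∑ j : Fin b, ∑ k : Fin b,
      if a + i.val < a + j.val ∧ a + j.val < a + k.val ∧ (G i).val < (G j).val ∧ (G j).val < (G k).val then 1 else 0)
      = ∑ i : Fin b, ∑ j : Fin b, ∑ k : Fin b,
      if i.val < j.val ∧ j.val < k.val ∧ (G i).val < (G j).val ∧ (G j).val < (G k).val then 1 else 0 := by
    refine Finset.sum_congr rfl fun i _ => Finset.sum_congr rfl fun j _ => Finset.sum_congr rfl fun k _ => ?_
    exact if_congr (by omega) rfl rfl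
  rw [dFFG, dFGF, dFGG, dGFF, dGFG, dGGF, hFFF, hGGG]
  omega

lemma count132_blockPerm : count132 (blockPerm F G) = count132 F + count132 G := by
  rw [expand132, expand132, expand132]
  simp only [Fin.sum_univ_add]
  simp only [Fin.lt_def, blockPerm_castAdd, blockPerm_natAdd, Fin.coe_castAdd, Fin.coe_natAdd]
  simp only [Finset.sum_add_distrib]
  have dFFG : (∑ i : Fin a, ∑ j : Fin a, ∑ k : Fin b,
      if i.val < j.val ∧ j.val < a + k.val ∧ b + (F i).val < (G k).val ∧ (G k).val < b + (F j).val then 1 else 0) = 0 := by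
    refine Finset.sum_eq_zero fun i _ => Finset.sum_eq_zero fun j _ => Finset.sum_eq_zero fun k _ => ?_
    rw [if_neg]; have := (G k).isLt; omega
  have dFGF : (∑ i : Fin a, ∑ j : Fin b, ∑ k : Fin a,
      if i.val < a + j.val ∧ a + j.val < k.val ∧ b + (F i).val < b + (F k).val ∧ b + (F k).val < (G j).val then 1 else 0) = 0 := by
    refine Finset.sum_eq_zero fun i _ => Finset.sum_eq_zero fun j _ => Finset.sum_eq_zero fun k _ => ?_
    rw [if_neg]; have := (G j).isLt; omega
  have dFGG : (∑ i : Fin a, ∑ j : Fin b, ∑ k : Fin b,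
      if i.val < a + j.val ∧ a + j.val < a + k.val ∧ b + (F i).val < (G k).val ∧ (G k).val < (G j).val then 1 else 0) = 0 := by
    refine Finset.sum_eq_zero fun i _ => Finset.sum_eq_zero fun j _ => Finset.sum_eq_zero fun k _ => ?_
    rw [if_neg]; have := (G k).isLt; omega
  have dGFF : (∑ i : Fin b, ∑ j : Fin a, ∑ k : Fin a,
      if a + i.val < j.val ∧ j.val < k.val ∧ (G i).val < b + (F k).val ∧ b + (F k).val < b + (F j).val then 1 else 0) = 0 := by
    refine Finset.sum_eq_zero fun i _ => Finset.sum_eq_zero fun j _ => Finset.sum_eq_zero fun k _ => ?_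
    rw [if_neg]; have := j.isLt; omega
  have dGFG : (∑ i : Fin b, ∑ j : Fin a, ∑ k : Fin b,
      if a + i.val < j.val ∧ j.val < a + k.val ∧ (G i).val < (G k).val ∧ (G k).val < b + (F j).val then 1 else 0) = 0 := by
    refine Finset.sum_eq_zero fun i _ => Finset.sum_eq_zero fun j _ => Finset.sum_eq_zero fun k _ => ?_
    rw [if_neg]; have := j.isLt; omega
  have dGGF : (∑ i : Fin b, ∑ j : Fin b, ∑ k : Fin a,
      if a + i.val < a + j.val ∧ a + j.val < k.val ∧ (G i).val < b + (F k).val ∧ b + (F k).val < (G j).val then 1 else 0) = 0 := by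
    refine Finset.sum_eq_zero fun i _ => Finset.sum_eq_zero fun j _ => Finset.sum_eq_zero fun k _ => ?_
    rw [if_neg]; have := k.isLt; omega
  have hFFF : (∑ i : Fin a, ∑ j : Fin a, ∑ k : Fin a,
      if i.val < j.val ∧ j.val < k.val ∧ b + (F i).val < b + (F k).val ∧ b + (F k).val < b + (F j).val then 1 else 0)
      = ∑ i : Fin a, ∑ j : Fin a, ∑ k : Fin a,
      if i.val < j.val ∧ j.val < k.val ∧ (F i).val < (F k).val ∧ (F k).val < (F j).val then 1 else 0 := by
    refine Finset.sum_congr rfl fun i _ => Finset.sum_congr rfl fun j _ => Finset.sum_congr rfl fun k _ => ?_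
    exact if_congr (by omega) rfl rfl
  have hGGG : (∑ i : Fin b, ∑ j : Fin b, ∑ k : Fin b,
      if a + i.val < a + j.val ∧ a + j.val < a + k.val ∧ (G i).val < (G k).val ∧ (G k).val < (G j).val then 1 else 0)
      = ∑ i : Fin b, ∑ j : Fin b, ∑ k : Fin b,
      if i.val < j.val ∧ j.val < k.val ∧ (G i).val < (G k).val ∧ (G k).val < (G j).val then 1 else 0 := by
    refine Finset.sum_congr rfl fun i _ => Finset.sum_congr rfl fun j _ => Finset.sum_congr rfl fun k _ => ?_
    exact if_congr (by omega) rfl rfl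
  rw [dFFG, dFGF, dFGG, dGFF, dGFG, dGGF, hFFF, hGGG]
  omega


variable {p : ℕ}


def appFun (p : ℕ) (f : Fin p → Fin p) (i : Fin (p + 1)) : Fin (p + 1) :=
  if h : i.val < p then Fin.castSucc (f ⟨i.val, h⟩) else Fin.last p

lemma appFun_castSucc (f : Fin p → Fin p) (i : Fin p) :
    (appFun p f (Fin.castSucc i)).val = (f i).val := by
  rw [appFun, dif_pos (by simp [i.isLt])]
  simp

lemma appFun_last (f : Fin p → Fin p) : (appFun p f (Fin.last p)).val = p := by
  rw [appFun, dif_neg (by simp)]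
  simp

lemma appFun_inj {f : Fin p → Fin p} (hf : Function.Injective f) :
    Function.Injective (appFun p f) := by
  intro x y h
  have hv : (appFun p f x).val = (appFun p f y).val := congrArg Fin.val h
  clear h
  induction x using Fin.lastCases with
  | last =>
    induction y using Fin.lastCases with
    | last => rfl
    | cast j => rw [appFun_last, appFun_castSucc] at hv; have := (f j).isLt; omega
  | cast i =>
    induction y using Fin.lastCases with
    | last => rw [appFun_last, appFun_castSucc] at hv; have := (f i).isLt; omega
    | cast j =>
      rw [appFun_castSucc, appFun_castSucc] at hv
      rw [hf (Fin.ext hv)]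

noncomputable def appPerm (L : Perm (Fin p)) : Perm (Fin (p + 1)) :=
  Equiv.ofBijective _ (Finite.injective_iff_bijective.mp (appFun_inj L.injective))

lemma appPerm_castSucc (L : Perm (Fin p)) (i : Fin p) :
    (appPerm L (Fin.castSucc i)).val = (L i).val := appFun_castSucc _ i
lemma appPerm_last (L : Perm (Fin p)) : (appPerm L (Fin.last p)).val = p := appFun_last _

variable (L : Perm (Fin p))

lemma count12_appPerm : count12 (appPerm L) = count12 L + p := by
  rw [expand12, expand12]
  simp only [Fin.sum_univ_castSucc]
  simp only [Fin.lt_def, appPerm_castSucc, appPerm_last, Fin.coe_castSucc, Fin.val_last]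
  simp only [Finset.sum_add_distrib]
  have dLast : (∑ j : Fin p, if p < j.val ∧ p < (L j).val then 1 else 0) = 0 := by
    refine Finset.sum_eq_zero fun j _ => ?_
    rw [if_neg]; have := j.isLt; omega
  have hCL : (∑ i : Fin p, if i.val < p ∧ (L i).val < p then 1 else 0) = p := by
    rw [Finset.sum_congr rfl fun i (_ : i ∈ univ) => if_pos ⟨i.isLt, (L i).isLt⟩]
    simp
  have hCC : (∑ i : Fin p, ∑ j : Fin p, if i.val < j.val ∧ (L i).val < (L j).val then 1 else 0)
      = count12 L := by rw [expand12]; simp only [Fin.lt_def]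
  have dLL : (if p < p ∧ p < p then 1 else 0) = 0 := by rw [if_neg]; omega
  rw [dLast, hCL, dLL]
  omega

lemma count123_appPerm : count123 (appPerm L) = count123 L + count12 L := by
  rw [expand123, expand12, expand123]
  simp only [Fin.sum_univ_castSucc]
  simp only [Fin.lt_def, appPerm_castSucc, appPerm_last, Fin.coe_castSucc, Fin.val_last]
  simp only [Finset.sum_add_distrib]
  -- dead: (c,last,c) : ∑ i ∑ k : if i < p ∧ p < k ... ; (c,last,last); (last,c,c); (last,c,last); (last,last,c); (last,last,last)
  have d1 : (∑ i : Fin p, ∑ k : Fin p, if i.val < p ∧ p < k.val ∧ (L i).val < p ∧ p < (L k).val then 1 else 0) = 0 := by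
    refine Finset.sum_eq_zero fun i _ => Finset.sum_eq_zero fun k _ => ?_
    rw [if_neg]; have := k.isLt; omega
  have d2 : (∑ i : Fin p, if i.val < p ∧ p < p ∧ (L i).val < p ∧ p < p then 1 else 0) = 0 := by
    refine Finset.sum_eq_zero fun i _ => ?_; rw [if_neg]; omega
  have d3 : (∑ j : Fin p, ∑ k : Fin p, if p < j.val ∧ j.val < k.val ∧ p < (L j).val ∧ (L j).val < (L k).val then 1 else 0) = 0 := by
    refine Finset.sum_eq_zero fun j _ => Finset.sum_eq_zero fun k _ => ?_
    rw [if_neg]; have := j.isLt; omega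
  have d4 : (∑ j : Fin p, if p < j.val ∧ j.val < p ∧ p < (L j).val ∧ (L j).val < p then 1 else 0) = 0 := by
    refine Finset.sum_eq_zero fun j _ => ?_; rw [if_neg]; have := j.isLt; omega
  have d5 : (∑ k : Fin p, if p < p ∧ p < k.val ∧ p < p ∧ p < (L k).val then 1 else 0) = 0 := by
    refine Finset.sum_eq_zero fun k _ => ?_; rw [if_neg]; omega
  have d6 : (if p < p ∧ p < p ∧ p < p ∧ p < p then 1 else 0) = 0 := by rw [if_neg]; omega
  have hCCL : (∑ i : Fin p, ∑ j : Fin p, if i.val < j.val ∧ j.val < p ∧ (L i).val < (L j).val ∧ (L j).val < p then 1 else 0)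
      = ∑ i : Fin p, ∑ j : Fin p, if i.val < j.val ∧ (L i).val < (L j).val then 1 else 0 := by
    refine Finset.sum_congr rfl fun i _ => Finset.sum_congr rfl fun j _ => ?_
    refine if_congr ?_ rfl rfl
    have := j.isLt; have := (L j).isLt; omega
  rw [d1, d2, d3, d4, d5, d6, hCCL]
  omega

lemma count132_appPerm : count132 (appPerm L) = count132 L := by
  rw [expand132, expand132]
  simp only [Fin.sum_univ_castSucc]
  simp only [Fin.lt_def, appPerm_castSucc, appPerm_last, Fin.coe_castSucc, Fin.val_last]
  simp only [Finset.sum_add_distrib]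
  have d0 : (∑ i : Fin p, ∑ j : Fin p, if i.val < j.val ∧ j.val < p ∧ (L i).val < p ∧ p < (L j).val then 1 else 0) = 0 := by
    refine Finset.sum_eq_zero fun i _ => Finset.sum_eq_zero fun j _ => ?_
    rw [if_neg]; have := (L j).isLt; omega
  have d1 : (∑ i : Fin p, ∑ k : Fin p, if i.val < p ∧ p < k.val ∧ (L i).val < (L k).val ∧ (L k).val < p then 1 else 0) = 0 := by
    refine Finset.sum_eq_zero fun i _ => Finset.sum_eq_zero fun k _ => ?_
    rw [if_neg]; have := k.isLt; omega
  have d2 : (∑ i : Fin p, if i.val < p ∧ p < p ∧ (L i).val < p ∧ p < p then 1 else 0) = 0 := by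
    refine Finset.sum_eq_zero fun i _ => ?_; rw [if_neg]; omega
  have d3 : (∑ j : Fin p, ∑ k : Fin p, if p < j.val ∧ j.val < k.val ∧ p < (L k).val ∧ (L k).val < (L j).val then 1 else 0) = 0 := by
    refine Finset.sum_eq_zero fun j _ => Finset.sum_eq_zero fun k _ => ?_
    rw [if_neg]; have := j.isLt; omega
  have d4 : (∑ j : Fin p, if p < j.val ∧ j.val < p ∧ p < p ∧ p < (L j).val then 1 else 0) = 0 := by
    refine Finset.sum_eq_zero fun j _ => ?_; rw [if_neg]; have := j.isLt; omega
  have d5 : (∑ k : Fin p, if p < p ∧ p < k.val ∧ p < (L k).val ∧ (L k).val < p then 1 else 0) = 0 := by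
    refine Finset.sum_eq_zero fun k _ => ?_; rw [if_neg]; omega
  have d6 : (if p < p ∧ p < p ∧ p < p ∧ p < p then 1 else 0) = 0 := by rw [if_neg]; omega
  rw [d0, d1, d2, d3, d4, d5, d6]
  omega



lemma card_filter_val_lt (n c : ℕ) (h : c ≤ n) :
    ((univ : Finset (Fin n)).filter (fun y => y.val < c)).card = c := by
  classical
  have key : ((univ : Finset (Fin n)).filter (fun y => y.val < c)).card
      = (univ : Finset (Fin c)).card := by
    refine Finset.card_bij' (fun y hy => (⟨y.val, (Finset.mem_filter.mp hy).2⟩ : Fin c))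
      (fun z _ => (⟨z.val, lt_of_lt_of_le z.isLt h⟩ : Fin n)) ?_ ?_ ?_ ?_
    · intro y hy; exact Finset.mem_univ _
    · intro z hz
      refine Finset.mem_filter.mpr ⟨Finset.mem_univ _, z.isLt⟩
    · intro y hy; rfl
    · intro z hz; rfl
  simpa using key


lemma block_surj (π : Perm (Fin (a + b)))
    (hv : ∀ i : Fin (a + b), i.val < a → b ≤ (π i).val) :
    ∃ (F : Perm (Fin a)) (G : Perm (Fin b)), π = blockPerm F G := by
  classical
  -- complementary bound
  have hlow : ∀ i : Fin (a + b), a ≤ i.val → (π i).val < b := by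
    intro i hi
    by_contra hcon
    push_neg at hcon
    -- top set and image
    let Stop := (univ : Finset (Fin (a+b))).filter (fun y => b ≤ y.val)
    let Im := ((univ : Finset (Fin (a+b))).filter (fun x => x.val < a)).image π
    have hsub : Im ⊆ Stop := by
      intro y hy
      rcases Finset.mem_image.mp hy with ⟨x, hx, rfl⟩
      exact Finset.mem_filter.mpr ⟨Finset.mem_univ _, hv x (Finset.mem_filter.mp hx).2⟩
    have hcardIm : Im.card = a := by
      rw [show Im = ((univ : Finset (Fin (a+b))).filter (fun x => x.val < a)).image π from rfl,
        Finset.card_image_of_injective _ π.injective,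
        card_filter_val_lt (a+b) a (by omega)]
    have hcardStop : Stop.card = a := by
      have h1 : ((univ : Finset (Fin (a+b))).filter (fun y => ¬ b ≤ y.val)).card = b := by
        have : ((univ : Finset (Fin (a+b))).filter (fun y => ¬ b ≤ y.val))
            = ((univ : Finset (Fin (a+b))).filter (fun y => y.val < b)) := by
          apply Finset.filter_congr; intro y _; exact not_le
        rw [this, card_filter_val_lt (a+b) b (by omega)]
      have h2 := Finset.card_filter_add_card_filter_not
        (s := (univ : Finset (Fin (a+b)))) (p := fun y => b ≤ y.val)
      simp only [Finset.card_univ, Fintype.card_fin] at h2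
      show ((univ : Finset (Fin (a+b))).filter (fun y => b ≤ y.val)).card = a
      omega
    have hEq : Im = Stop := Finset.eq_of_subset_of_card_le hsub (by omega)
    -- π i ∈ Stop = Im, contradiction with injectivity
    have hmem : π i ∈ Im := by
      rw [hEq]; exact Finset.mem_filter.mpr ⟨Finset.mem_univ _, hcon⟩
    rcases Finset.mem_image.mp hmem with ⟨x, hx, hxe⟩
    have := π.injective hxe
    have := (Finset.mem_filter.mp hx).2
    omega
  -- define F and G
  have hFv : ∀ i : Fin a, (π (Fin.castAdd b i)).val - b < a := by
    intro i
    have h1 := hv (Fin.castAdd b i) (by simp [i.isLt])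
    have h2 := (π (Fin.castAdd b i)).isLt
    omega
  have hGv : ∀ j : Fin b, (π (Fin.natAdd a j)).val < b := by
    intro j; exact hlow _ (by simp)
  set F0 : Fin a → Fin a := fun i => ⟨(π (Fin.castAdd b i)).val - b, hFv i⟩ with hF0
  set G0 : Fin b → Fin b := fun j => ⟨(π (Fin.natAdd a j)).val, hGv j⟩ with hG0
  have hFinj : Function.Injective F0 := by
    intro x y hxy
    have h1 := hv (Fin.castAdd b x) (by simp [x.isLt])
    have h2 := hv (Fin.castAdd b y) (by simp [y.isLt])
    have hval : (F0 x).val = (F0 y).val := congrArg Fin.val hxy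
    simp only [hF0] at hval
    have : π (Fin.castAdd b x) = π (Fin.castAdd b y) := Fin.ext (by omega)
    have := π.injective this
    have : (Fin.castAdd b x).val = (Fin.castAdd b y).val := congrArg Fin.val this
    exact Fin.ext (by simpa using this)
  have hGinj : Function.Injective G0 := by
    intro x y hxy
    have hval : (G0 x).val = (G0 y).val := congrArg Fin.val hxy
    simp only [hG0] at hval
    have : π (Fin.natAdd a x) = π (Fin.natAdd a y) := Fin.ext (by omega)
    have := π.injective this
    have : (Fin.natAdd a x).val = (Fin.natAdd a y).val := congrArg Fin.val this
    exact Fin.ext (by simpa using this)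
  refine ⟨Equiv.ofBijective F0 (Finite.injective_iff_bijective.mp hFinj),
    Equiv.ofBijective G0 (Finite.injective_iff_bijective.mp hGinj), ?_⟩
  apply Equiv.ext
  intro x
  induction x using Fin.addCases with
  | left i =>
    apply Fin.ext
    rw [blockPerm_castAdd]
    have h1 := hv (Fin.castAdd b i) (by simp [i.isLt])
    show (π (Fin.castAdd b i)).val = b + (F0 i).val
    simp only [hF0]
    omega
  | right j =>
    apply Fin.ext
    rw [blockPerm_natAdd]
    rfl


variable {p q : ℕ}

noncomputable def psi (L : Perm (Fin p)) (R : Perm (Fin q)) : Perm (Fin (p+1+q)) :=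
  blockPerm (appPerm L) R

lemma psi_castAdd (L : Perm (Fin p)) (R : Perm (Fin q)) (i : Fin p) :
    (psi L R (Fin.castAdd q (Fin.castSucc i))).val = q + (L i).val := by
  rw [psi, blockPerm_castAdd, appPerm_castSucc]

lemma psi_natAdd (L : Perm (Fin p)) (R : Perm (Fin q)) (j : Fin q) :
    (psi L R (Fin.natAdd (p+1) j)).val = (R j).val := by
  rw [psi, blockPerm_natAdd]

lemma psi_max (L : Perm (Fin p)) (R : Perm (Fin q)) :
    (psi L R ⟨p, by omega⟩).val = p + q := by
  have h : (⟨p, by omega⟩ : Fin (p+1+q)) = Fin.castAdd q (Fin.last p) := Fin.ext (by simp)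
  rw [h, psi, blockPerm_castAdd, appPerm_last]
  omega

lemma count132_psi (L : Perm (Fin p)) (R : Perm (Fin q)) :
    count132 (psi L R) = count132 L + count132 R := by
  rw [psi, count132_blockPerm, count132_appPerm]

lemma count123_psi (L : Perm (Fin p)) (R : Perm (Fin q)) :
    count123 (psi L R) = (count123 L + count12 L) + count123 R := by
  rw [psi, count123_blockPerm, count123_appPerm]

lemma count12_psi (L : Perm (Fin p)) (R : Perm (Fin q)) :
    count12 (psi L R) = (count12 L + p) + count12 R := by
  rw [psi, count12_blockPerm, count12_appPerm]

lemma psi_inj {L L' : Perm (Fin p)} {R R' : Perm (Fin q)}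
    (h : psi L R = psi L' R') : L = L' ∧ R = R' := by
  constructor
  · apply Equiv.ext
    intro i
    have h1 := congrArg (fun σ : Perm (Fin (p+1+q)) => (σ (Fin.castAdd q (Fin.castSucc i))).val) h
    simp only [psi_castAdd] at h1
    exact Fin.ext (by omega)
  · apply Equiv.ext
    intro j
    have h1 := congrArg (fun σ : Perm (Fin (p+1+q)) => (σ (Fin.natAdd (p+1) j)).val) h
    simp only [psi_natAdd] at h1
    exact Fin.ext h1

lemma app_surj (F : Perm (Fin (p+1))) (hl : F (Fin.last p) = Fin.last p) :
    ∃ L : Perm (Fin p), F = appPerm L := by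
  classical
  have hval : ∀ i : Fin p, (F (Fin.castSucc i)).val < p := by
    intro i
    have hne : F (Fin.castSucc i) ≠ Fin.last p := by
      rw [← hl]
      intro hcon
      have := F.injective hcon
      have := congrArg Fin.val this
      simp at this
      omega
    have h1 := (F (Fin.castSucc i)).isLt
    have h2 : (F (Fin.castSucc i)).val ≠ p := fun hc => hne (Fin.ext (by simp [hc]))
    omega
  set L0 : Fin p → Fin p := fun i => ⟨(F (Fin.castSucc i)).val, hval i⟩ with hL0
  have hinj : Function.Injective L0 := by
    intro x y hxy
    have h1 : (L0 x).val = (L0 y).val := congrArg Fin.val hxy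
    simp only [hL0] at h1
    have := F.injective (Fin.ext h1 : F (Fin.castSucc x) = F (Fin.castSucc y))
    have := congrArg Fin.val this
    exact Fin.ext (by simpa using this)
  refine ⟨Equiv.ofBijective L0 (Finite.injective_iff_bijective.mp hinj), ?_⟩
  apply Equiv.ext
  intro x
  induction x using Fin.lastCases with
  | last => rw [hl]; exact Fin.ext (by rw [appPerm_last]; simp)
  | cast i => exact Fin.ext (by rw [appPerm_castSucc]; rfl)

lemma psi_surj (π : Perm (Fin (p+1+q))) (h132 : count132 π = 0)
    (hmax : (π ⟨p, by omega⟩).val = p + q) :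
    ∃ (L : Perm (Fin p)) (R : Perm (Fin q)), π = psi L R := by
  classical
  have hA : ∀ i k : Fin (p+1+q), i.val < p → p < k.val → (π k).val < (π i).val := by
    intro i k hi hk
    by_contra hcon
    push_neg at hcon
    have hik : i ≠ k := fun hc => by rw [hc] at hi; omega
    have hne : (π i).val ≠ (π k).val := fun hc =>
      hik (π.injective (Fin.ext hc))
    have hlt : (π i).val < (π k).val := by omega
    have hkp : k ≠ (⟨p, by omega⟩ : Fin (p+1+q)) := fun hc => by
      have := congrArg Fin.val hc; simp at this; omega
    have hkmax : (π k).val < p + q := by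
      have h1 := (π k).isLt
      have h2 : (π k).val ≠ p + q := fun hc => by
        have : π k = π ⟨p, by omega⟩ := Fin.ext (by rw [hc, hmax])
        exact hkp (π.injective this)
      omega
    have hmem : (⟨i, ⟨p, by omega⟩, k⟩ : Fin (p+1+q) × Fin (p+1+q) × Fin (p+1+q)) ∈
        (univ : Finset (Fin (p+1+q) × Fin (p+1+q) × Fin (p+1+q))).filter (fun t =>
          t.1 < t.2.1 ∧ t.2.1 < t.2.2 ∧ π t.1 < π t.2.2 ∧ π t.2.2 < π t.2.1) := by
      refine Finset.mem_filter.mpr ⟨Finset.mem_univ _, ?_, ?_, ?_, ?_⟩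
      · exact Fin.lt_def.mpr (by simpa using hi)
      · exact Fin.lt_def.mpr (by simpa using hk)
      · exact Fin.lt_def.mpr hlt
      · exact Fin.lt_def.mpr (by rw [hmax]; exact hkmax)
    have := Finset.card_ne_zero_of_mem hmem
    unfold count132 at h132
    exact this h132
  have hB : ∀ i : Fin (p+1+q), i.val < p → q ≤ (π i).val := by
    intro i hi
    have hinj2 : Function.Injective (fun j : Fin q => π (Fin.natAdd (p+1) j)) := by
      intro x y hxy
      have := π.injective hxy
      have := congrArg Fin.val this
      exact Fin.ext (by simpa using this)
    have hsub : (univ : Finset (Fin q)).image (fun j => π (Fin.natAdd (p+1) j)) ⊆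
        (univ : Finset (Fin (p+1+q))).filter (fun y => y.val < (π i).val) := by
      intro y hy
      rcases Finset.mem_image.mp hy with ⟨j, _, rfl⟩
      refine Finset.mem_filter.mpr ⟨Finset.mem_univ _, ?_⟩
      exact hA i (Fin.natAdd (p+1) j) hi (by simp; omega)
    have hcard := Finset.card_le_card hsub
    rw [Finset.card_image_of_injective _ hinj2, card_filter_val_lt _ _ (by have := (π i).isLt; omega)] at hcard
    simpa using hcard
  have hv : ∀ i : Fin (p+1+q), i.val < p + 1 → q ≤ (π i).val := by
    intro i hi
    rcases Nat.lt_or_ge i.val p with h | h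
    · exact hB i h
    · have : i = (⟨p, by omega⟩ : Fin (p+1+q)) := Fin.ext (by show i.val = p; omega)
      rw [this, hmax]
      omega
  obtain ⟨F, G, hFG⟩ := block_surj π hv
  have hFl : F (Fin.last p) = Fin.last p := by
    have h1 : (⟨p, by omega⟩ : Fin (p+1+q)) = Fin.castAdd q (Fin.last p) := Fin.ext (by simp)
    rw [hFG] at hmax
    rw [h1, blockPerm_castAdd] at hmax
    exact Fin.ext (by simp; omega)
  obtain ⟨L, hL⟩ := app_surj F hFl
  exact ⟨L, G, by rw [hFG, hL]; rfl⟩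


end Aux
-- APPEND-TO-MAIN marker
namespace Aux2
open Finset Equiv Aux

def S (m t n : ℕ) : ℕ :=
  ((Finset.univ : Finset (Perm (Fin n))).filter (fun π =>
    count132 π = 0 ∧ count123 π + m * count12 π = t)).card

lemma fiber_card (m t p q : ℕ) :
    ((Finset.univ : Finset (Perm (Fin (p+1+q)))).filter (fun π =>
      (count132 π = 0 ∧ count123 π + m * count12 π = t) ∧ (π ⟨p, by omega⟩).val = p + q)).card
    = ((Finset.univ : Finset (Perm (Fin p) × Perm (Fin q))).filter (fun LR =>
      (count132 LR.1 = 0 ∧ count132 LR.2 = 0) ∧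
      (count123 LR.1 + (m+1) * count12 LR.1) + ((count123 LR.2 + m * count12 LR.2) + m * p) = t)).card := by
  classical
  have hinj : Function.Injective (fun LR : Perm (Fin p) × Perm (Fin q) => psi LR.1 LR.2) := by
    intro x y h
    obtain ⟨h1, h2⟩ := psi_inj h
    exact Prod.ext h1 h2
  have himg : ((Finset.univ : Finset (Perm (Fin (p+1+q)))).filter (fun π =>
      (count132 π = 0 ∧ count123 π + m * count12 π = t) ∧ (π ⟨p, by omega⟩).val = p + q))
      = (((Finset.univ : Finset (Perm (Fin p) × Perm (Fin q))).filter (fun LR =>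
      (count132 LR.1 = 0 ∧ count132 LR.2 = 0) ∧
      (count123 LR.1 + (m+1) * count12 LR.1) + ((count123 LR.2 + m * count12 LR.2) + m * p) = t)).image
        (fun LR => psi LR.1 LR.2)) := by
    ext π
    simp only [Finset.mem_filter, Finset.mem_image, Finset.mem_univ, true_and]
    constructor
    · rintro ⟨⟨h132, hstat⟩, hpos⟩
      obtain ⟨L, R, rfl⟩ := psi_surj π h132 hpos
      refine ⟨(L, R), ⟨?_, ?_⟩, rfl⟩
      · dsimp only
        have := count132_psi L R
        constructor <;> omega
      · dsimp only
        rw [count123_psi, count12_psi] at hstat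
        rw [← hstat]; ring
    · rintro ⟨⟨L, R⟩, ⟨⟨hL, hR⟩, hstat⟩, rfl⟩
      dsimp only at hL hR hstat ⊢
      have h3 := count132_psi L R
      refine ⟨⟨by omega, ?_⟩, psi_max L R⟩
      rw [count123_psi, count12_psi, ← hstat]; ring
  rw [himg, Finset.card_image_of_injective _ hinj]

lemma prod_split {α β : Type*} [Fintype α] [Fintype β] [DecidableEq α] [DecidableEq β]
    (PL : α → Prop) (PR : β → Prop) [DecidablePred PL] [DecidablePred PR]
    (u : α → ℕ) (v : β → ℕ) (c t : ℕ) :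
    ((Finset.univ : Finset (α × β)).filter (fun x => (PL x.1 ∧ PR x.2) ∧ u x.1 + (v x.2 + c) = t)).card
    = ∑ t1 ∈ Finset.range (t+1), ∑ t2 ∈ Finset.range (t+1),
        if t1 + t2 + c = t then
          ((Finset.univ.filter (fun a => PL a ∧ u a = t1)).card
            * (Finset.univ.filter (fun b => PR b ∧ v b = t2)).card)
        else 0 := by
  rw [Finset.card_eq_sum_card_fiberwise (f := fun x : α × β => (u x.1, v x.2))
    (t := Finset.range (t+1) ×ˢ Finset.range (t+1))
    (by
      intro x hx
      obtain ⟨-, hst⟩ := Finset.mem_filter.mp hx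
      dsimp only
      refine Finset.mem_product.mpr ⟨Finset.mem_range.mpr (by omega), Finset.mem_range.mpr (by omega)⟩)]
  rw [Finset.sum_product]
  refine Finset.sum_congr rfl fun t1 ht1 => Finset.sum_congr rfl fun t2 ht2 => ?_
  by_cases hc : t1 + t2 + c = t
  · rw [if_pos hc]
    have hpred : ((Finset.univ : Finset (α × β)).filter (fun x => (PL x.1 ∧ PR x.2) ∧ u x.1 + (v x.2 + c) = t)).filter
        (fun x => (u x.1, v x.2) = (t1, t2))
        = (Finset.univ.filter (fun a => PL a ∧ u a = t1)) ×ˢ (Finset.univ.filter (fun b => PR b ∧ v b = t2)) := by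
      ext x
      simp only [Finset.mem_filter, Finset.mem_product, Finset.mem_univ, true_and, Prod.mk.injEq]
      constructor
      · rintro ⟨⟨⟨hpl, hpr⟩, -⟩, h1, h2⟩
        exact ⟨⟨hpl, h1⟩, ⟨hpr, h2⟩⟩
      · rintro ⟨⟨hpl, h1⟩, hpr, h2⟩
        exact ⟨⟨⟨hpl, hpr⟩, by omega⟩, h1, h2⟩
    rw [hpred, Finset.card_product]
  · rw [if_neg hc]
    have hempty : ∀ x ∈ ((Finset.univ : Finset (α × β)).filter (fun x => (PL x.1 ∧ PR x.2) ∧ u x.1 + (v x.2 + c) = t)),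
        ¬ ((fun x : α × β => (u x.1, v x.2)) x = (t1, t2)) := by
      intro x hx
      obtain ⟨-, ⟨-, hst⟩⟩ := Finset.mem_filter.mp hx
      dsimp only
      rw [Prod.mk.injEq]
      rintro ⟨h1, h2⟩
      omega
    rw [Finset.filter_false_of_mem hempty, Finset.card_empty]

instance TcardDec (p N : ℕ) (π : Perm (Fin N)) : Decidable (∀ h : p < N, (π ⟨p, h⟩).val = N - 1) := by
  by_cases h : p < N
  · exact decidable_of_iff ((π ⟨p, h⟩).val = N - 1)
      ⟨fun hh _ => hh, fun hh => hh h⟩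
  · exact isTrue (fun hh => absurd hh h)

def Tcard (m t p N : ℕ) : ℕ :=
  ((Finset.univ : Finset (Perm (Fin N))).filter (fun π =>
    (count132 π = 0 ∧ count123 π + m * count12 π = t) ∧
    (∀ h : p < N, (π ⟨p, h⟩).val = N - 1))).card

lemma key (m t n : ℕ) :
    S m t (n+1) = ∑ p ∈ Finset.range (n+1), ∑ t1 ∈ Finset.range (t+1), ∑ t2 ∈ Finset.range (t+1),
      if t1 + t2 + m*p = t then S (m+1) t1 p * S m t2 (n-p) else 0 := by
  rw [S, Finset.card_eq_sum_card_fiberwise (f := fun π : Perm (Fin (n+1)) => (π.symm ⟨n, by omega⟩).val)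
    (t := Finset.range (n+1)) (fun π _ => Finset.mem_range.mpr (π.symm ⟨n, by omega⟩).isLt)]
  refine Finset.sum_congr rfl fun p hp => ?_
  have hpn : p ≤ n := by have := Finset.mem_range.mp hp; omega
  have step1 : ((Finset.univ.filter (fun π : Perm (Fin (n+1)) =>
      count132 π = 0 ∧ count123 π + m * count12 π = t)).filter
        (fun π => (π.symm ⟨n, by omega⟩).val = p)).card = Tcard m t p (n+1) := by
    rw [Tcard]
    congr 1
    ext π
    simp only [Finset.mem_filter, Finset.mem_univ, true_and]
    constructor
    · rintro ⟨⟨h1, h2⟩, h3⟩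
      refine ⟨⟨h1, h2⟩, fun h => ?_⟩
      have he : π.symm ⟨n, by omega⟩ = ⟨p, h⟩ := Fin.ext h3
      have := congrArg π he
      rw [Equiv.apply_symm_apply] at this
      rw [← this]; simp
    · rintro ⟨⟨h1, h2⟩, h3⟩
      refine ⟨⟨h1, h2⟩, ?_⟩
      have h4 := h3 (by omega)
      have he : π ⟨p, by omega⟩ = ⟨n, by omega⟩ := Fin.ext (by rw [h4]; simp)
      have := congrArg π.symm he
      rw [Equiv.symm_apply_apply] at this
      rw [← this]
  rw [step1]
  have step2 : Tcard m t p (n+1) = Tcard m t p (p+1+(n-p)) := by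
    congr 1
    omega
  rw [step2]
  have step3 : Tcard m t p (p+1+(n-p)) =
      ((Finset.univ : Finset (Perm (Fin (p+1+(n-p))))).filter (fun π =>
        (count132 π = 0 ∧ count123 π + m * count12 π = t) ∧ (π ⟨p, by omega⟩).val = p + (n-p))).card := by
    rw [Tcard]
    congr 1
    ext π
    simp only [Finset.mem_filter, Finset.mem_univ, true_and]
    constructor
    · rintro ⟨h1, h2⟩
      refine ⟨h1, ?_⟩
      have h3 := h2 (by omega)
      have heq : p + 1 + (n - p) - 1 = p + (n - p) := by omega
      rw [heq] at h3
      exact h3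
    · rintro ⟨h1, h2⟩
      refine ⟨h1, fun h => ?_⟩
      have heq : p + 1 + (n - p) - 1 = p + (n - p) := by omega
      rw [heq]
      exact h2
  rw [step3, fiber_card m t p (n-p)]
  exact prod_split (fun L => count132 L = 0) (fun R => count132 R = 0)
    (fun L => count123 L + (m+1) * count12 L) (fun R => count123 R + m * count12 R) (m*p) t

end Aux2
namespace Aux3
open Finset Equiv PowerSeries Aux Aux2

lemma S_zero (m t : ℕ) : S m t 0 = if t = 0 then 1 else 0 := by
  have h123 : ∀ π : Perm (Fin 0), count123 π = 0 := fun π => by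
    rw [count123]; simp
  have h132 : ∀ π : Perm (Fin 0), count132 π = 0 := fun π => by
    rw [count132]; simp
  have h12 : ∀ π : Perm (Fin 0), count12 π = 0 := fun π => by
    rw [count12]; simp
  rw [S]
  by_cases ht : t = 0
  · rw [if_pos ht]
    rw [Finset.filter_true_of_mem (fun π _ => ⟨h132 π, by rw [h123, h12, ht]; ring⟩)]
    simp [Finset.card_univ]
  · rw [if_neg ht]
    rw [Finset.filter_false_of_mem (fun π _ => fun hcon => ht (by
      have h2 := hcon.2
      rw [h123 π, h12 π] at h2
      omega))]
    simp

lemma key1 (t n : ℕ) :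
    S 1 t (n+1) = ∑ p ∈ Finset.range (t+1), ∑ t1 ∈ Finset.range (t+1), ∑ t2 ∈ Finset.range (t+1),
      if t1 + t2 + p = t then (if p ≤ n then S 2 t1 p * S 1 t2 (n-p) else 0) else 0 := by
  rw [key 1 t n]
  simp only [show (1:ℕ)+1 = 2 from rfl, one_mul]
  have hcongr : (∑ p ∈ Finset.range (n+1), ∑ t1 ∈ Finset.range (t+1), ∑ t2 ∈ Finset.range (t+1),
      if t1 + t2 + p = t then S 2 t1 p * S 1 t2 (n-p) else 0)
      = ∑ p ∈ Finset.range (n+1), ∑ t1 ∈ Finset.range (t+1), ∑ t2 ∈ Finset.range (t+1),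
      if t1 + t2 + p = t then (if p ≤ n then S 2 t1 p * S 1 t2 (n-p) else 0) else 0 := by
    refine Finset.sum_congr rfl fun p hp => ?_
    have hpn : p ≤ n := by have := Finset.mem_range.mp hp; omega
    refine Finset.sum_congr rfl fun t1 _ => Finset.sum_congr rfl fun t2 _ => ?_
    by_cases hc : t1 + t2 + p = t
    · rw [if_pos hc, if_pos hc, if_pos hpn]
    · rw [if_neg hc, if_neg hc]
  rw [hcongr]
  have hzero1 : ∀ p ∈ Finset.range (n+t+2), p ∉ Finset.range (n+1) →
      (∑ t1 ∈ Finset.range (t+1), ∑ t2 ∈ Finset.range (t+1),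
      if t1 + t2 + p = t then (if p ≤ n then S 2 t1 p * S 1 t2 (n-p) else 0) else 0) = 0 := by
    intro p _ hp
    have hpn : ¬ p ≤ n := fun hc => hp (Finset.mem_range.mpr (by omega))
    refine Finset.sum_eq_zero fun t1 _ => Finset.sum_eq_zero fun t2 _ => ?_
    rw [if_neg hpn, ite_self]
  rw [Finset.sum_subset (Finset.range_subset_range.mpr (by omega : n+1 ≤ n+t+2)) hzero1]
  have hzero2 : ∀ p ∈ Finset.range (n+t+2), p ∉ Finset.range (t+1) →
      (∑ t1 ∈ Finset.range (t+1), ∑ t2 ∈ Finset.range (t+1),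
      if t1 + t2 + p = t then (if p ≤ n then S 2 t1 p * S 1 t2 (n-p) else 0) else 0) = 0 := by
    intro p _ hp
    have hpt : ¬ p < t + 1 := fun hc => hp (Finset.mem_range.mpr hc)
    refine Finset.sum_eq_zero fun t1 _ => Finset.sum_eq_zero fun t2 _ => ?_
    rw [if_neg (by omega)]
  exact (Finset.sum_subset (Finset.range_subset_range.mpr (by omega : t+1 ≤ n+t+2)) hzero2).symm

lemma key0 (t n : ℕ) :
    S 0 t (n+1) = ∑ t1 ∈ Finset.range (t+1), ∑ p ∈ Finset.range (n+1),
      S 1 t1 p * S 0 (t - t1) (n-p) := by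
  rw [key 0 t n, Finset.sum_comm]
  refine Finset.sum_congr rfl fun t1 ht1 => Finset.sum_congr rfl fun p _ => ?_
  have ht1' : t1 ≤ t := by have := Finset.mem_range.mp ht1; omega
  have step : ∀ t2 ∈ Finset.range (t+1),
      (if t1 + t2 + 0*p = t then S 1 t1 p * S 0 t2 (n-p) else 0)
      = (if t2 = t - t1 then S 1 t1 p * S 0 t2 (n-p) else 0) := by
    intro t2 _
    refine if_congr (by omega) rfl rfl
  rw [Finset.sum_congr rfl step, Finset.sum_ite_eq' (Finset.range (t+1)) (t - t1)
    (fun t2 => S 1 t1 p * S 0 t2 (n-p)), if_pos (Finset.mem_range.mpr (by omega))]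

noncomputable def F (m t : ℕ) : PowerSeries ℚ := PowerSeries.mk fun n => (S m t n : ℚ)

lemma E1 (t : ℕ) :
    F 1 t = C (if t = 0 then (1:ℚ) else 0)
      + ∑ p ∈ Finset.range (t+1), ∑ t1 ∈ Finset.range (t+1), ∑ t2 ∈ Finset.range (t+1),
        if t1 + t2 + p = t then (C (S 2 t1 p : ℚ)) * (X^(p+1) * F 1 t2) else 0 := by
  ext n
  rw [map_add]
  rw [show ((PowerSeries.coeff n) (∑ p ∈ Finset.range (t+1), ∑ t1 ∈ Finset.range (t+1), ∑ t2 ∈ Finset.range (t+1),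
        if t1 + t2 + p = t then (C (S 2 t1 p : ℚ)) * (X^(p+1) * F 1 t2) else 0))
      = ∑ p ∈ Finset.range (t+1), ∑ t1 ∈ Finset.range (t+1), ∑ t2 ∈ Finset.range (t+1),
        if t1 + t2 + p = t then (S 2 t1 p : ℚ) * (if p + 1 ≤ n then (S 1 t2 (n - (p+1)) : ℚ) else 0) else 0 from by
    rw [map_sum]
    refine Finset.sum_congr rfl fun p _ => ?_
    rw [map_sum]
    refine Finset.sum_congr rfl fun t1 _ => ?_
    rw [map_sum]
    refine Finset.sum_congr rfl fun t2 _ => ?_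
    rw [apply_ite (PowerSeries.coeff n), map_zero]
    refine if_congr Iff.rfl ?_ rfl
    rw [PowerSeries.coeff_C_mul, PowerSeries.coeff_X_pow_mul']
    rw [F, PowerSeries.coeff_mk]]
  cases n with
  | zero =>
    rw [PowerSeries.coeff_zero_C, F, PowerSeries.coeff_mk, S_zero]
    have : ∀ p ∈ Finset.range (t+1), ∀ t1 ∈ Finset.range (t+1), ∀ t2 ∈ Finset.range (t+1),
        (if t1 + t2 + p = t then (S 2 t1 p : ℚ) * (if p + 1 ≤ 0 then (S 1 t2 (0 - (p+1)) : ℚ) else 0) else 0) = 0 := by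
      intro p _ t1 _ t2 _
      rw [if_neg (show ¬ (p + 1 ≤ 0) by omega), mul_zero, ite_self]
    rw [Finset.sum_congr rfl fun p hp => Finset.sum_congr rfl fun t1 ht1 =>
      Finset.sum_congr rfl fun t2 ht2 => this p hp t1 ht1 t2 ht2]
    simp
  | succ n =>
    rw [F, PowerSeries.coeff_mk, key1 t n]
    rw [PowerSeries.coeff_C, if_neg (show ¬(n + 1 = 0) by omega), zero_add]
    rw [Nat.cast_sum]
    refine Finset.sum_congr rfl fun p _ => ?_
    rw [Nat.cast_sum]
    refine Finset.sum_congr rfl fun t1 _ => ?_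
    rw [Nat.cast_sum]
    refine Finset.sum_congr rfl fun t2 _ => ?_
    rw [apply_ite (Nat.cast : ℕ → ℚ), Nat.cast_zero]
    refine if_congr Iff.rfl ?_ rfl
    rw [apply_ite (Nat.cast : ℕ → ℚ), Nat.cast_zero, Nat.cast_mul, mul_ite, mul_zero]
    refine if_congr ⟨fun h => by omega, fun h => by omega⟩ ?_ rfl
    rw [show n + 1 - (p+1) = n - p by omega]

lemma E0 (t : ℕ) :
    F 0 t = C (if t = 0 then (1:ℚ) else 0)
      + X * ∑ t1 ∈ Finset.range (t+1), F 1 t1 * F 0 (t - t1) := by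
  ext n
  rw [map_add]
  cases n with
  | zero =>
    rw [PowerSeries.coeff_zero_C, F, PowerSeries.coeff_mk, S_zero]
    have : (PowerSeries.coeff 0) (X * ∑ t1 ∈ Finset.range (t+1), F 1 t1 * F 0 (t - t1)) = 0 := by
      rw [PowerSeries.coeff_zero_eq_constantCoeff, map_mul, PowerSeries.constantCoeff_X, zero_mul]
    rw [this, add_zero]
    simp
  | succ n =>
    rw [F, PowerSeries.coeff_mk, key0 t n]
    rw [PowerSeries.coeff_C, if_neg (show ¬(n + 1 = 0) by omega), zero_add]
    rw [PowerSeries.coeff_succ_X_mul, map_sum, Nat.cast_sum]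
    refine Finset.sum_congr rfl fun t1 _ => ?_
    rw [PowerSeries.coeff_mul, Finset.Nat.sum_antidiagonal_eq_sum_range_succ_mk, Nat.cast_sum]
    refine Finset.sum_congr rfl fun p _ => ?_
    rw [Nat.cast_mul, F, F, PowerSeries.coeff_mk, PowerSeries.coeff_mk]

end Aux3
namespace Aux4
open Finset Equiv PowerSeries Aux Aux2 Aux3

lemma s00 : S 2 0 0 = 1 := by decide
lemma s01 : S 2 0 1 = 1 := by decide
lemma s02 : S 2 0 2 = 1 := by decide
lemma s03 : S 2 0 3 = 1 := by decide
lemma s04 : S 2 0 4 = 1 := by decide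
lemma s10 : S 2 1 0 = 0 := by decide
lemma s11 : S 2 1 1 = 0 := by decide
lemma s12 : S 2 1 2 = 0 := by decide
lemma s13 : S 2 1 3 = 0 := by decide
lemma s20 : S 2 2 0 = 0 := by decide
lemma s21 : S 2 2 1 = 0 := by decide
lemma s22 : S 2 2 2 = 1 := by decide
lemma s30 : S 2 3 0 = 0 := by decide
lemma s31 : S 2 3 1 = 0 := by decide
lemma s40 : S 2 4 0 = 0 := by decide

lemma e10 : F 1 0 = 1 + X * F 1 0 := by
  nth_rewrite 1 [E1 0]
  norm_num [Finset.sum_range_succ, Finset.sum_range_zero, s00]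

lemma e11 : F 1 1 = X * F 1 1 + X^2 * F 1 0 := by
  nth_rewrite 1 [E1 1]
  norm_num [Finset.sum_range_succ, Finset.sum_range_zero, s00, s01, s10, s11]

lemma e12 : F 1 2 = X * F 1 2 + X^2 * F 1 1 + X^3 * F 1 0 := by
  nth_rewrite 1 [E1 2]
  norm_num [Finset.sum_range_succ, Finset.sum_range_zero, s00, s01, s02, s10, s11, s12, s20, s21]

lemma e13 : F 1 3 = X * F 1 3 + X^2 * F 1 2 + X^3 * F 1 1 + X^4 * F 1 0 := by
  nth_rewrite 1 [E1 3]
  norm_num [Finset.sum_range_succ, Finset.sum_range_zero, s00, s01, s02, s03,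
    s10, s11, s12, s13, s20, s21, s22, s30, s31]

lemma e14 : F 1 4 = X * F 1 4 + X^2 * F 1 3 + X^3 * F 1 2 + X^4 * F 1 1
    + X^5 * F 1 0 + X^3 * F 1 0 := by
  nth_rewrite 1 [E1 4]
  norm_num [Finset.sum_range_succ, Finset.sum_range_zero, s00, s01, s02, s03, s04,
    s10, s11, s12, s13, s20, s21, s22, s30, s31, s40]
  ring

lemma e00 : F 0 0 = 1 + X * (F 1 0 * F 0 0) := by
  nth_rewrite 1 [E0 0]
  norm_num [Finset.sum_range_succ, Finset.sum_range_zero]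

lemma e01 : F 0 1 = X * (F 1 0 * F 0 1 + F 1 1 * F 0 0) := by
  nth_rewrite 1 [E0 1]
  norm_num [Finset.sum_range_succ, Finset.sum_range_zero]

lemma e02 : F 0 2 = X * (F 1 0 * F 0 2 + F 1 1 * F 0 1 + F 1 2 * F 0 0) := by
  nth_rewrite 1 [E0 2]
  norm_num [Finset.sum_range_succ, Finset.sum_range_zero]

lemma e03 : F 0 3 = X * (F 1 0 * F 0 3 + F 1 1 * F 0 2 + F 1 2 * F 0 1 + F 1 3 * F 0 0) := by
  nth_rewrite 1 [E0 3]
  norm_num [Finset.sum_range_succ, Finset.sum_range_zero]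

lemma e04 : F 0 4 = X * (F 1 0 * F 0 4 + F 1 1 * F 0 3 + F 1 2 * F 0 2
    + F 1 3 * F 0 1 + F 1 4 * F 0 0) := by
  nth_rewrite 1 [E0 4]
  norm_num [Finset.sum_range_succ, Finset.sum_range_zero]

lemma hX1 : (1 - X : PowerSeries ℚ) ≠ 0 := by
  intro h
  have := congrArg (PowerSeries.constantCoeff (R := ℚ)) h
  simp at this

lemma hcan (k : ℕ) (A B : PowerSeries ℚ) (h : (1-X)^k * A = (1-X)^k * B) : A = B :=
  mul_left_cancel₀ (pow_ne_zero k hX1) h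

lemma hf0 : (1 - X) * F 1 0 = 1 := by linear_combination e10
lemma hf1 : (1 - X)^2 * F 1 1 = X^2 := by
  linear_combination (1-X)*e11 + X^2*hf0
lemma hf2 : (1 - X)^3 * F 1 2 = X^3 := by
  linear_combination (1-X)^2*e12 + X^2*hf1 + X^3*(1-X)*hf0
lemma hf3 : (1 - X)^4 * F 1 3 = X^4 := by
  linear_combination (1-X)^3*e13 + X^2*hf2 + X^3*(1-X)*hf1 + X^4*(1-X)^2*hf0
lemma hf4 : (1 - X)^5 * F 1 4 = X^3 - 3*X^4 + 4*X^5 - X^6 := by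
  linear_combination (1-X)^4*e14 + X^2*hf3 + X^3*(1-X)*hf2 + X^4*(1-X)^2*hf1
    + (X^5+X^3)*(1-X)^3*hf0
lemma hg0 : (1 - 2*X) * F 0 0 = 1 - X := by
  linear_combination (1-X)*e00 + X*(F 0 0)*hf0
lemma hg1 : (1 - 2*X)^2 * F 0 1 = X^3 := by
  refine hcan 1 _ _ ?_
  linear_combination (1-X)^2*(1-2*X)*e01 + X*(1-X)*(1-2*X)*(F 0 1)*hf0
    + X*(1-2*X)*(F 0 0)*hf1 + X^3*hg0
lemma hg2 : (1 - 2*X)^3 * F 0 2 = X^4 - X^5 := by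
  refine hcan 2 _ _ ?_
  linear_combination (1-X)^3*(1-2*X)^2*e02 + X*(1-X)^2*(1-2*X)^2*(F 0 2)*hf0
    + X*(1-X)*(1-2*X)^2*(F 0 1)*hf1 + X^3*(1-X)*hg1
    + X*(1-2*X)^2*(F 0 0)*hf2 + X^4*(1-2*X)*hg0
lemma hg3 : (1 - 2*X)^4 * F 0 3 = X^5*(1-X)^2 := by
  refine hcan 3 _ _ ?_
  linear_combination (1-X)^4*(1-2*X)^3*e03 + X*(1-X)^3*(1-2*X)^3*(F 0 3)*hf0
    + X*(1-X)^2*(1-2*X)^3*(F 0 2)*hf1 + X^3*(1-X)^2*hg2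
    + X*(1-X)*(1-2*X)^3*(F 0 1)*hf2 + X^4*(1-X)*(1-2*X)*hg1
    + X*(1-2*X)^3*(F 0 0)*hf3 + X^5*(1-2*X)^2*hg0
lemma hg4 : (1 - 2*X)^5 * F 0 4 = X^4 - 6*X^5 + 13*X^6 - 11*X^7 + 3*X^8 - X^9 := by
  refine hcan 4 _ _ ?_
  linear_combination (1-X)^5*(1-2*X)^4*e04 + X*(1-X)^4*(1-2*X)^4*(F 0 4)*hf0
    + X*(1-X)^3*(1-2*X)^4*(F 0 3)*hf1 + X^3*(1-X)^3*hg3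
    + X*(1-X)^2*(1-2*X)^4*(F 0 2)*hf2 + X^4*(1-X)^2*(1-2*X)*hg2
    + X*(1-X)*(1-2*X)^4*(F 0 1)*hf3 + X^5*(1-X)*(1-2*X)^2*hg1
    + X*(1-2*X)^4*(F 0 0)*hf4 + X*(1-2*X)^3*(X^3-3*X^4+4*X^5-X^6)*hg0

end Aux4

theorem genfun_no132_4 :
    (1 - 2 * PowerSeries.X) ^ 5 * PowerSeries.mk (fun n => (A n : ℚ)) = -(PowerSeries.X ^ 4) * (PowerSeries.X ^ 5 - 3 * PowerSeries.X ^ 4 + 11 * PowerSeries.X ^ 3 - 13 * PowerSeries.X ^ 2 + 6 * PowerSeries.X - 1) := by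
  have hAS : PowerSeries.mk (fun n => (A n : ℚ)) = Aux3.F 0 4 := by
    rw [Aux3.F]
    congr 1
    funext n
    congr 1
    simp only [A, Aux2.S]
    congr 1
    ext π
    simp
  rw [hAS]
  linear_combination Aux4.hg4
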